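/- Let (X,d) be a metric space, μ a Borel measure on X, x₀ ∈ X, r(x) = d(x₀,x), and B(x₀,t) the open ball of radius t about x₀. Assume μ has subexponential volume growth, i.e. limsup_{R→∞} ln(μ(B(x₀,R)))/R = 0. Then for every α > 0 the function x ↦ e^{-α r(x)} is μ-integrable on X: ∫_X e^{-α r(x)} dμ(x) < ∞. -/

import Mathlib

open Real MeasureTheory Filter

/-- Under subexponential volume growth (`limsup_{R→∞} ln(μ(B(x₀,R)))/R = 0`), for every
`α > 0` the function `x ↦ e^{-α r(x)}`, `r(x) = d(x₀,x)`, is `μ`-integrable. -/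
theorem stmt_6 {X : Type*} [MetricSpace X] [MeasurableSpace X] [BorelSpace X]
    (μ : Measure X) (x₀ : X)
    (hvol : Filter.limsup
        (fun R : ℝ => ENNReal.log (μ (Metric.ball x₀ R)) / (R : EReal)) Filter.atTop = 0) :
    ∀ α > 0, Integrable (fun x => Real.exp (-α * dist x₀ x)) μ := by
  intro α hα
  -- Step 1: from the limsup hypothesis, get an eventual exponential bound on ball volumes
  have hhalf : (0 : EReal) < ((α / 2 : ℝ) : EReal) := by
    exact_mod_cast (by positivity : (0:ℝ) < α / 2)
  have h1 : ∀ᶠ R : ℝ in atTop,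
      ENNReal.log (μ (Metric.ball x₀ R)) / (R : EReal) < ((α / 2 : ℝ) : EReal) :=
    Filter.eventually_lt_of_limsup_lt (by rw [hvol]; exact hhalf)
  obtain ⟨N, hN⟩ := (h1.and (eventually_ge_atTop (1 : ℝ))).exists_forall_of_atTop
  have key : ∀ R : ℝ, N ≤ R → μ (Metric.ball x₀ R) ≤ ENNReal.ofReal (Real.exp (α / 2 * R)) := by
    intro R hR
    obtain ⟨hlt, hR1⟩ := hN R hR
    have hRpos : (0 : EReal) < (R : EReal) := by exact_mod_cast lt_of_lt_of_le one_pos hR1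
    have hle : ENNReal.log (μ (Metric.ball x₀ R)) ≤ (R : EReal) * ((α / 2 : ℝ) : EReal) :=
      (EReal.div_le_iff_le_mul hRpos (by simp)).mp hlt.le
    have hle' : ENNReal.log (μ (Metric.ball x₀ R)) ≤ ((α / 2 * R : ℝ) : EReal) := by
      rw [← EReal.coe_mul] at hle
      convert hle using 2
      ring
    calc μ (Metric.ball x₀ R) = EReal.exp (ENNReal.log (μ (Metric.ball x₀ R))) := by
            rw [ENNReal.exp_log]
      _ ≤ EReal.exp ((α / 2 * R : ℝ) : EReal) := EReal.exp_monotone hle'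
      _ = ENNReal.ofReal (Real.exp (α / 2 * R)) := by rw [EReal.exp_coe]
  -- choose a natural number M ≥ max N 1
  obtain ⟨M, hM⟩ := exists_nat_ge (max N 1)
  have keyM : ∀ n : ℕ, μ (Metric.ball x₀ (n + 1 + M)) ≤
      ENNReal.ofReal (Real.exp (α / 2 * (n + 1 + M))) := by
    intro n
    apply key
    have h1 : N ≤ (M : ℝ) := le_trans (le_max_left _ _) hM
    have : (0:ℝ) ≤ (n:ℝ) + 1 := by positivity
    linarith
  -- annuli
  set A : ℕ → Set X := fun n => Metric.ball x₀ (n + 1) \ Metric.ball x₀ n with hA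
  have hAmeas : ∀ n, MeasurableSet (A n) :=
    fun n => measurableSet_ball.diff measurableSet_ball
  -- pointwise bound
  have hpt : ∀ x : X, ENNReal.ofReal (Real.exp (-α * dist x₀ x)) ≤
      ∑' n : ℕ, (A n).indicator (fun _ => ENNReal.ofReal (Real.exp (-α * n))) x := by
    intro x
    set n := ⌊dist x₀ x⌋₊ with hn
    have hxA : x ∈ A n := by
      constructor
      · rw [Metric.mem_ball, dist_comm]
        exact lt_of_lt_of_le (Nat.lt_floor_add_one _) (by norm_num [hn])
      · rw [Metric.mem_ball, dist_comm]
        exact not_lt.mpr (Nat.floor_le dist_nonneg)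
    have := ENNReal.le_tsum (f := fun n =>
      (A n).indicator (fun _ => ENNReal.ofReal (Real.exp (-α * n))) x) n
    refine le_trans ?_ this
    rw [Set.indicator_of_mem hxA]
    apply ENNReal.ofReal_le_ofReal
    apply Real.exp_le_exp.mpr
    have : (n : ℝ) ≤ dist x₀ x := Nat.floor_le dist_nonneg
    nlinarith
  -- the lintegral is finite
  have hfin : ∫⁻ x, ENNReal.ofReal (Real.exp (-α * dist x₀ x)) ∂μ < ⊤ := by
    have hle1 : ∫⁻ x, ENNReal.ofReal (Real.exp (-α * dist x₀ x)) ∂μ ≤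
        ∑' n : ℕ, ENNReal.ofReal (Real.exp (-α * n)) * μ (A n) := by
      refine le_trans (lintegral_mono hpt) ?_
      rw [lintegral_tsum (fun n => ((measurable_const).indicator (hAmeas n)).aemeasurable)]
      refine ENNReal.tsum_le_tsum (fun n => ?_)
      rw [lintegral_indicator (hAmeas n)]
      simp [Measure.restrict_apply (hAmeas n)]
    refine lt_of_le_of_lt hle1 ?_
    -- bound each term geometrically
    set C : ENNReal := ENNReal.ofReal (Real.exp (α / 2 * (1 + M))) with hC
    set r : ENNReal := ENNReal.ofReal (Real.exp (-(α / 2))) with hr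
    have hterm : ∀ n : ℕ, ENNReal.ofReal (Real.exp (-α * n)) * μ (A n) ≤ C * r ^ n := by
      intro n
      have hAsub : μ (A n) ≤ μ (Metric.ball x₀ (n + 1 + M)) := by
        apply measure_mono
        refine le_trans Set.diff_subset ?_
        apply Metric.ball_subset_ball
        have : (0:ℝ) ≤ (M:ℝ) := Nat.cast_nonneg M
        linarith
      calc ENNReal.ofReal (Real.exp (-α * n)) * μ (A n)
          ≤ ENNReal.ofReal (Real.exp (-α * n)) *
            ENNReal.ofReal (Real.exp (α / 2 * (n + 1 + M))) :=
            mul_le_mul_right (le_trans hAsub (keyM n)) _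
        _ = ENNReal.ofReal (Real.exp (-α * n) * Real.exp (α / 2 * (n + 1 + M))) := by
            rw [ENNReal.ofReal_mul (Real.exp_nonneg _)]
        _ = C * r ^ n := by
            rw [hC, hr, ← ENNReal.ofReal_pow (Real.exp_nonneg _), ← Real.exp_nat_mul,
              ← ENNReal.ofReal_mul (Real.exp_nonneg _), ← Real.exp_add, ← Real.exp_add]
            congr 1
            ring
    refine lt_of_le_of_lt (ENNReal.tsum_le_tsum hterm) ?_
    rw [ENNReal.tsum_mul_left, ENNReal.tsum_geometric]
    have hrlt : r < 1 := by
      rw [hr, ← ENNReal.ofReal_one]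
      refine (ENNReal.ofReal_lt_ofReal_iff one_pos).mpr ?_
      calc Real.exp (-(α / 2)) < Real.exp 0 := Real.exp_lt_exp.mpr (by linarith)
        _ = 1 := Real.exp_zero
    have h1r : (1 : ENNReal) - r ≠ 0 := by
      simp only [ne_eq, tsub_eq_zero_iff_le, not_le]
      exact hrlt
    exact ENNReal.mul_lt_top ENNReal.ofReal_lt_top (ENNReal.inv_lt_top.mpr (pos_iff_ne_zero.mpr h1r))
  -- conclude integrability
  constructor
  · exact ((Real.continuous_exp.comp ((continuous_const.mul
      (continuous_const.dist continuous_id)))).aestronglyMeasurable)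
  · rw [hasFiniteIntegral_iff_ofReal (Eventually.of_forall fun x => (Real.exp_pos _).le)]
    exact hfin
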